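/- Let R be a semiprime ring admitting an injective ring homomorphism into a semisimple Artinian ring. Then R has only finitely many minimal prime ideals. -/

import Mathlib

set_option linter.unusedSectionVars false

/-- A ring is semiprime if `a R a = 0` implies `a = 0`. -/
def IsSemiprimeRing' (R : Type*) [Ring R] : Prop :=
  ∀ a : R, (∀ r : R, a * r * a = 0) → a = 0

/-- A two-sided ideal `P` is prime if `P ≠ ⊤` and `a R b ⊆ P` implies `a ∈ P` or `b ∈ P`. -/
def TwoSidedIdeal.IsPrime' {R : Type*} [Ring R] (P : TwoSidedIdeal R) : Prop :=
  P ≠ ⊤ ∧ ∀ a b : R, (∀ r : R, a * r * b ∈ P) → a ∈ P ∨ b ∈ P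

/-- A minimal prime of a ring. -/
def TwoSidedIdeal.IsMinimalPrime' {R : Type*} [Ring R] (P : TwoSidedIdeal R) : Prop :=
  P.IsPrime' ∧ ∀ Q : TwoSidedIdeal R, Q.IsPrime' → Q ≤ P → Q = P

namespace SPAux

variable {R : Type*} [Ring R]

/-- Annihilator of a right-multiplication-closed set, as a two-sided ideal. -/
def annS (X : Set R) (hX : ∀ ⦃x⦄, x ∈ X → ∀ s : R, x * s ∈ X) : TwoSidedIdeal R :=
  TwoSidedIdeal.mk' {r | ∀ x ∈ X, x * r = 0}
    (fun x _ => mul_zero x)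
    (fun {a b} ha hb x hx => by rw [mul_add, ha x hx, hb x hx, add_zero])
    (fun {a} ha x hx => by rw [mul_neg, ha x hx, neg_zero])
    (fun {a b} hb x hx => by rw [← mul_assoc]; exact hb _ (hX hx a))
    (fun {a b} ha x hx => by rw [← mul_assoc, ha x hx, zero_mul])

lemma mem_annS {X : Set R} {hX} {r : R} : r ∈ annS X hX ↔ ∀ x ∈ X, x * r = 0 :=
  TwoSidedIdeal.mem_mk' _ _ _ _ _ _ _

/-- Annihilator of a two-sided ideal. -/
def annI (I : TwoSidedIdeal R) : TwoSidedIdeal R :=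
  annS (I : Set R) (fun x hx s => I.mul_mem_right x s hx)

lemma mem_annI {I : TwoSidedIdeal R} {r : R} : r ∈ annI I ↔ ∀ x ∈ I, x * r = 0 := mem_annS

section hsp
variable (hsp : IsSemiprimeRing' R)
include hsp

lemma L1 {W : TwoSidedIdeal R} {t : R} (h : ∀ w ∈ W, w * t = 0) {w : R} (hw : w ∈ W) :
    t * w = 0 := by
  apply hsp
  intro s
  have h1 : w * (s * t) = 0 := by
    have := h _ (W.mul_mem_right w s hw); rwa [mul_assoc] at this
  calc t * w * s * (t * w) = t * (w * (s * t)) * w := by simp only [mul_assoc]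
    _ = 0 := by rw [h1, mul_zero, zero_mul]

lemma L2 {W : TwoSidedIdeal R} {t : R} (h : ∀ w ∈ W, t * w = 0) {w : R} (hw : w ∈ W) :
    w * t = 0 := by
  apply hsp
  intro s
  have h1 : t * (s * w) = 0 := h _ (W.mul_mem_left s w hw)
  calc w * t * s * (w * t) = w * (t * (s * w)) * t := by simp only [mul_assoc]
    _ = 0 := by rw [h1, mul_zero, zero_mul]

lemma le_annI_self_bot {I : TwoSidedIdeal R} (h : I ≤ annI I) : I = ⊥ := by
  rw [eq_bot_iff]
  intro x hx
  rw [TwoSidedIdeal.mem_bot]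
  exact hsp x (fun r => mem_annI.mp (h hx) _ (I.mul_mem_right x r hx))

lemma le_annI_annI (B : TwoSidedIdeal R) : B ≤ annI (annI B) := by
  intro b hb
  rw [mem_annI]
  intro y hy
  exact L1 hsp (fun w hw => mem_annI.mp hy w hw) hb

lemma mem_annI_annS {X : Set R} {hX} {x : R} (hx : x ∈ X) : x ∈ annI (annS X hX) := by
  rw [mem_annI]
  intro y hy
  exact L2 hsp (fun w hw => mem_annS.mp hw x hx) hy

lemma annS_closed {X : Set R} {hX} : annI (annI (annS X hX)) = annS X hX := by
  refine le_antisymm ?_ (le_annI_annI hsp _)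
  intro s hs
  rw [mem_annS]
  intro x hx
  exact mem_annI.mp hs x (mem_annI_annS hsp hx)

end hsp

lemma annI_antitone {I J : TwoSidedIdeal R} (h : I ≤ J) : annI J ≤ annI I := by
  intro r hr
  rw [mem_annI] at hr ⊢
  exact fun x hx => hr x (h hx)

/-- The family of "closed annihilator ideals" with nonzero annihilator. -/
def Aset (R : Type*) [Ring R] : Set (TwoSidedIdeal R) :=
  {B | annI (annI B) = B ∧ annI B ≠ ⊥}

variable (A : Type*) [Ring A] [IsSemisimpleRing A] (f : R →+* A)

/-- Left annihilator in `A` of the image of a subset of `R`. -/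
def lam (X : Set R) : Submodule A A where
  carrier := {a | ∀ x ∈ X, a * f x = 0}
  zero_mem' := fun x _ => zero_mul _
  add_mem' := fun {a b} ha hb x hx => by rw [add_mul, ha x hx, hb x hx, add_zero]
  smul_mem' := fun c a ha x hx => by rw [smul_eq_mul, mul_assoc, ha x hx, mul_zero]

lemma mem_lam {X : Set R} {a : A} : a ∈ lam A f X ↔ ∀ x ∈ X, a * f x = 0 := Iff.rfl

lemma lam_antitone {X Y : Set R} (h : X ⊆ Y) : lam A f Y ≤ lam A f X :=
  fun a ha x hx => ha x (h hx)

lemma stab (g : ℕ → Set R) (mono : ∀ n, g n ⊆ g (n + 1)) :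
    ∃ n, lam A f (g n) = lam A f (g (n + 1)) := by
  have mono' : Monotone g := monotone_nat_of_le_succ mono
  obtain ⟨n, hn⟩ := IsArtinian.monotone_stabilizes
    (⟨fun n => OrderDual.toDual (lam A f (g n)),
      fun a b hab => lam_antitone A f (mono' hab)⟩ : ℕ →o (Submodule A A)ᵒᵈ)
  exact ⟨n, congrArg OrderDual.ofDual (hn (n + 1) (Nat.le_succ n))⟩

variable (hsp : IsSemiprimeRing' R) (hf : Function.Injective f)
include hsp hf

lemma lam_eq {B C : TwoSidedIdeal R} (h : lam A f (B : Set R) = lam A f (C : Set R)) :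
    annI B = annI C := by
  have key : ∀ (I : TwoSidedIdeal R) (r : R), r ∈ annI I ↔ f r ∈ lam A f (I : Set R) := by
    intro I r
    rw [mem_annI, mem_lam]
    constructor
    · intro hr x hx
      rw [← map_mul]
      rw [show r * x = 0 from L1 hsp hr hx, map_zero]
    · intro hr x hx
      refine L2 hsp (fun w hw => ?_) hx
      have := hr w hw
      rw [← map_mul] at this
      exact hf (by rw [this, map_zero])
  ext r
  rw [key, key, h]

lemma exists_maximal {B : TwoSidedIdeal R} (hB : B ∈ Aset R) :
    ∃ C, C ∈ Aset R ∧ B ≤ C ∧ ∀ D ∈ Aset R, C ≤ D → D = C := by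
  by_contra h
  push_neg at h
  have step : ∀ C : {C : TwoSidedIdeal R // C ∈ Aset R ∧ B ≤ C},
      ∃ D : {C : TwoSidedIdeal R // C ∈ Aset R ∧ B ≤ C}, C.1 < D.1 := by
    rintro ⟨C, hC, hBC⟩
    obtain ⟨D, hD, hCD, hne⟩ := h C hC hBC
    exact ⟨⟨D, hD, hBC.trans hCD⟩, lt_of_le_of_ne hCD (Ne.symm hne)⟩
  choose st hst using step
  let seq : ℕ → {C : TwoSidedIdeal R // C ∈ Aset R ∧ B ≤ C} :=
    fun n => Nat.rec ⟨B, hB, le_rfl⟩ (fun _ C => st C) n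
  have hseq : ∀ n, (seq n).1 < (seq (n + 1)).1 := fun n => hst (seq n)
  obtain ⟨n, hn⟩ := stab A f (fun n => ((seq n).1 : Set R)) (fun n => (hseq n).le)
  have h2 : annI (seq n).1 = annI (seq (n + 1)).1 := lam_eq A f hsp hf hn
  have e : (seq n).1 = (seq (n + 1)).1 := by
    rw [← (seq n).2.1.1, ← (seq (n + 1)).2.1.1, h2]
  exact absurd e (hseq n).ne

omit hf in
lemma maximal_prime {C : TwoSidedIdeal R} (hC : C ∈ Aset R)
    (hmax : ∀ D ∈ Aset R, C ≤ D → D = C) : C.IsPrime' := by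
  obtain ⟨hCl, hTne⟩ := hC
  constructor
  · intro h1
    apply hTne
    rw [eq_bot_iff]
    intro t ht
    rw [TwoSidedIdeal.mem_bot]
    have := mem_annI.mp ht 1 (by rw [h1]; trivial)
    simpa using this
  · intro a b hab
    by_cases hb : b ∈ C
    · exact Or.inr hb
    left
    have hbT : ¬ ∀ t ∈ annI C, t * b = 0 := by
      intro hh
      exact hb (by rw [← hCl]; exact mem_annI.mpr hh)
    push_neg at hbT
    obtain ⟨t₀, ht₀, ht₀b⟩ := hbT
    set X : Set R := {v | ∃ t ∈ annI C, ∃ s u : R, v = t * s * b * u} with hXdef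
    have hX : ∀ ⦃x⦄, x ∈ X → ∀ s : R, x * s ∈ X := by
      rintro x ⟨t, ht, s, u, rfl⟩ s'
      exact ⟨t, ht, s, u * s', by simp only [mul_assoc]⟩
    have hXsubT : ∀ v ∈ X, v ∈ annI C := by
      rintro v ⟨t, ht, s, u, rfl⟩
      exact (annI C).mul_mem_right _ _ ((annI C).mul_mem_right _ _
        ((annI C).mul_mem_right _ _ ht))
    have hx₀ : t₀ * b ∈ X := ⟨t₀, ht₀, 1, 1, by rw [mul_one, mul_one]⟩
    have hEA : annS X hX ∈ Aset R := by
      refine ⟨annS_closed hsp, fun hbot => ht₀b ?_⟩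
      rw [← TwoSidedIdeal.mem_bot (R := R), ← hbot]
      exact mem_annI_annS hsp hx₀
    have hCE : C ≤ annS X hX := by
      intro r hr
      rw [mem_annS]
      intro v hv
      have hrT : r ∈ annI (annI C) := by rw [hCl]; exact hr
      exact mem_annI.mp hrT v (hXsubT v hv)
    have hEC : annS X hX = C := hmax _ hEA hCE
    rw [← hEC]
    rw [mem_annS]
    rintro v ⟨t, ht, s, u, rfl⟩
    apply hsp
    intro w
    have hc : a * (w * (t * s)) * b ∈ C := hab _
    have hd : s * (b * u) * (a * (w * (t * s)) * b) * (u * a) ∈ C :=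
      C.mul_mem_right _ _ (C.mul_mem_left _ _ hc)
    have h0 : t * (s * (b * u) * (a * (w * (t * s)) * b) * (u * a)) = 0 :=
      L1 hsp (fun x hx => mem_annI.mp ht x hx) hd
    calc t * s * b * u * a * w * (t * s * b * u * a)
        = t * (s * (b * u) * (a * (w * (t * s)) * b) * (u * a)) := by simp only [mul_assoc]
      _ = 0 := h0

lemma maximals_finite :
    {C : TwoSidedIdeal R | C ∈ Aset R ∧ ∀ D ∈ Aset R, C ≤ D → D = C}.Finite := by
  by_contra hinf
  let e := Set.Infinite.natEmbedding _ hinf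
  set T : ℕ → TwoSidedIdeal R := fun n => annI ((e n).1 : TwoSidedIdeal R) with hT
  have hTbot : ∀ n, T n ≠ ⊥ := fun n => (e n).2.1.2
  -- pairwise orthogonality
  have pair : ∀ i j, i ≠ j → ∀ x ∈ T i, ∀ y ∈ T j, x * y = 0 := by
    intro i j hij x hx y hy
    -- first, T j ≤ (e i).1
    have hBne : ((e j).1 : TwoSidedIdeal R) ≠ (e i).1 := by
      intro hh
      exact hij (e.injective (Subtype.ext hh)).symm
    have hnle : ¬ ((e j).1 : TwoSidedIdeal R) ≤ (e i).1 := by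
      intro hle
      exact hBne ((e j).2.2 _ (e i).2.1 hle ▸ rfl)
    have hy₀ : ∃ y₀ ∈ ((e j).1 : TwoSidedIdeal R), y₀ ∉ ((e i).1 : TwoSidedIdeal R) := by
      by_contra hh
      push_neg at hh
      exact hnle hh
    obtain ⟨y₀, hy₀j, hy₀i⟩ := hy₀
    have hprime := maximal_prime hsp (e i).2.1 (e i).2.2
    have hkey : ∀ r : R, y * r * y₀ ∈ ((e i).1 : TwoSidedIdeal R) := by
      intro r
      have hz : y * r * y₀ = 0 := by
        have hyr : y * r ∈ T j := (T j).mul_mem_right _ _ hy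
        exact L1 hsp (fun w hw => mem_annI.mp hyr w hw) hy₀j
      rw [hz]
      exact TwoSidedIdeal.zero_mem _
    have hyTj : y ∈ ((e i).1 : TwoSidedIdeal R) := by
      rcases hprime.2 y y₀ hkey with h' | h'
      · exact h'
      · exact absurd h' hy₀i
    -- now y ∈ (e i).1 = annI (T i), so x * y = 0
    have : y ∈ annI (T i) := by rw [hT]; rw [(e i).2.1.1]; exact hyTj
    exact mem_annI.mp this x hx
  -- increasing chain of unions
  set W : ℕ → Set R := fun k => {x | ∃ i ≤ k, x ∈ T i} with hW
  have hWmono : ∀ k, W k ⊆ W (k + 1) := by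
    rintro k x ⟨i, hi, hx⟩
    exact ⟨i, hi.trans (Nat.le_succ k), hx⟩
  obtain ⟨n, hn⟩ := stab A f W hWmono
  -- find an element distinguishing the two
  have hnb : ¬ T (n + 1) ≤ annI (T (n + 1)) := fun hle => hTbot (n + 1) (le_annI_self_bot hsp hle)
  have : ∃ t ∈ T (n + 1), t ∉ annI (T (n + 1)) := by
    by_contra hh
    push_neg at hh
    exact hnb hh
  obtain ⟨t, htmem, htn⟩ := this
  rw [mem_annI] at htn
  push_neg at htn
  obtain ⟨x'', hx''mem, hx''⟩ := htn
  -- f x'' ∈ lam (W n) but ∉ lam (W (n+1))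
  have hin : f x'' ∈ lam A f (W n) := by
    rw [mem_lam]
    rintro x ⟨i, hi, hx⟩
    rw [← map_mul]
    rw [pair (n + 1) i (by omega) x'' hx''mem x hx, map_zero]
  have hnotin : f x'' ∉ lam A f (W (n + 1)) := by
    rw [mem_lam]
    intro hh
    have := hh t ⟨n + 1, le_rfl, htmem⟩
    rw [← map_mul] at this
    exact hx'' (hf (by rw [this, map_zero]))
  rw [hn] at hin
  exact hnotin hin

lemma sInf_maximals_bot :
    sInf {C : TwoSidedIdeal R | C ∈ Aset R ∧ ∀ D ∈ Aset R, C ≤ D → D = C} = ⊥ := by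
  by_contra hW
  set W := sInf {C : TwoSidedIdeal R | C ∈ Aset R ∧ ∀ D ∈ Aset R, C ≤ D → D = C} with hWdef
  have hw₀ : ∃ w₀ ∈ W, w₀ ≠ (0 : R) := by
    by_contra hh
    push_neg at hh
    apply hW
    rw [eq_bot_iff]
    intro x hx
    rw [TwoSidedIdeal.mem_bot]
    exact hh x hx
  obtain ⟨w₀, hw₀, hw₀ne⟩ := hw₀
  have hWA : annI W ∈ Aset R := by
    refine ⟨annS_closed hsp, fun hbot => hw₀ne ?_⟩
    rw [← TwoSidedIdeal.mem_bot (R := R), ← hbot]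
    exact le_annI_annI hsp W hw₀
  obtain ⟨C, hC, hWC, hmax⟩ := exists_maximal A f hsp hf hWA
  have hWle : W ≤ C := sInf_le ⟨hC, hmax⟩
  have hTC : annI C ≤ annI W := annI_antitone hWle
  have hfin : annI C ≤ annI (annI C) := by
    rw [hC.1]
    exact hTC.trans hWC
  exact hC.2 (le_annI_self_bot hsp hfin)

omit hsp hf in
lemma inter_le_prime {P : TwoSidedIdeal R} (hP : P.IsPrime') (s : Set (TwoSidedIdeal R))
    (hs : s.Finite) : sInf s ≤ P → ∃ C ∈ s, C ≤ P := by
  refine Set.Finite.induction_on (motive := fun s _ => sInf s ≤ P → ∃ C ∈ s, C ≤ P) s hs ?_ ?_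
  · intro hle
    rw [sInf_empty] at hle
    exact absurd (top_le_iff.mp hle) hP.1
  · intro a s ha hsfin IH hle
    rw [sInf_insert] at hle
    by_cases hss : sInf s ≤ P
    · obtain ⟨C, hC, hCP⟩ := IH hss
      exact ⟨C, Set.mem_insert_of_mem _ hC, hCP⟩
    · have hy : ∃ y ∈ sInf s, y ∉ P := by
        by_contra hh
        push_neg at hh
        exact hss hh
      obtain ⟨y, hy, hyP⟩ := hy
      refine ⟨a, Set.mem_insert _ _, fun x hx => ?_⟩
      rcases hP.2 x y (fun r => hle ⟨a.mul_mem_right _ _ (a.mul_mem_right _ _ hx),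
        (sInf s).mul_mem_left _ _ hy⟩) with h' | h'
      · exact h'
      · exact absurd h' hyP

end SPAux

/-- A semiprime ring admitting an injective ring homomorphism into a semisimple Artinian
ring has only finitely many minimal primes. -/
theorem stmt_4 {R : Type*} [Ring R] (hsp : IsSemiprimeRing' R)
    (A : Type*) [Ring A] [IsSemisimpleRing A] (f : R →+* A)
    (hf : Function.Injective f) :
    {P : TwoSidedIdeal R | P.IsMinimalPrime'}.Finite := by
  classical
  refine (SPAux.maximals_finite A f hsp hf).subset ?_
  intro P hP
  have hle : sInf {C : TwoSidedIdeal R | C ∈ SPAux.Aset R ∧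
      ∀ D ∈ SPAux.Aset R, C ≤ D → D = C} ≤ P := by
    rw [SPAux.sInf_maximals_bot A f hsp hf]
    exact bot_le
  obtain ⟨C, hC, hCP⟩ := SPAux.inter_le_prime hP.1 _ (SPAux.maximals_finite A f hsp hf) hle
  have hCprime := SPAux.maximal_prime hsp hC.1 hC.2
  have := hP.2 C hCprime hCP
  rw [← this]
  exact hC
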